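/- Let G be a (d,λ)-expander graph and F ⊆ V a set with adversarial density α_F < 1 − λ. Then the subgraph of G induced by V∖F is connected. -/

import Mathlib

open Matrix Finset

/-- An orthonormal eigenbasis of a real symmetric matrix, with eigenvalues listed in
decreasing order (with multiplicity). -/
def EigSystem {ι : Type} [Fintype ι] {k : ℕ} (M : Matrix ι ι ℝ)
    (μ : Fin k → ℝ) (φ : Fin k → ι → ℝ) : Prop :=
  Fintype.card ι = k ∧
  (∀ a b, ∑ i, φ a i * φ b i = if a = b then (1 : ℝ) else 0) ∧
  (∀ a, M.mulVec (φ a) = μ a • φ a) ∧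
  (∀ a b : Fin k, a ≤ b → μ b ≤ μ a)

set_option maxHeartbeats 1000000 in
/-- Let `G` be a `(d,λ)`-expander graph (a `d`-regular graph whose
normalized adjacency matrix has all non-leading eigenvalues at most `λ` in absolute
value) and `F ⊆ V` a set whose adversarial density
`α_F = max_{v ∉ F} |N(v) ∩ F| / d` satisfies `α_F < 1 − λ`.  Then the subgraph of
`G` induced by `V ∖ F` is connected. -/
theorem stmt_6 (n d : ℕ) (hd : 0 < d) (hn : 2 ≤ n)
    (G : SimpleGraph (Fin n)) [DecidableRel G.Adj] (hreg : G.IsRegularOfDegree d)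
    (μ : Fin n → ℝ) (φ : Fin n → Fin n → ℝ)
    (hA : EigSystem ((d : ℝ)⁻¹ • G.adjMatrix ℝ) μ φ)
    (lam : ℝ) (hlam : max |μ ⟨1, by omega⟩| |μ ⟨n - 1, by omega⟩| ≤ lam)
    (F : Finset (Fin n)) (hne : Fᶜ.Nonempty)
    (α : ℝ) (hα : α = Fᶜ.sup' hne fun v => ((F.filter (G.Adj v)).card : ℝ) / d)
    (hsmall : α < 1 - lam) :
    (G.induce {v : Fin n | v ∉ F}).Connected := by
  classical
  obtain ⟨hcard, horth, heig, hmono⟩ := hA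
  by_contra hcon
  have hd0 : (0:ℝ) < d := by exact_mod_cast hd
  set M : Matrix (Fin n) (Fin n) ℝ := (d : ℝ)⁻¹ • G.adjMatrix ℝ with hMdef
  -- a pair of non-reachable vertices in the induced graph
  have hnety : Nonempty ({v : Fin n | v ∉ F} : Set (Fin n)) := by
    obtain ⟨v, hv⟩ := hne
    exact ⟨⟨v, by simpa using hv⟩⟩
  rw [SimpleGraph.connected_iff] at hcon
  have hpre : ¬ (G.induce {v : Fin n | v ∉ F}).Preconnected := fun h => hcon ⟨h, hnety⟩
  rw [SimpleGraph.Preconnected] at hpre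
  push_neg at hpre
  obtain ⟨⟨u, hu⟩, ⟨w, hw⟩, hur⟩ := hpre
  set H := G.induce {v : Fin n | v ∉ F} with hH
  have huF : u ∉ F := hu
  have hwF : w ∉ F := hw
  -- the connected component of u, and the rest
  set S : Finset (Fin n) := univ.filter
    (fun v => ∃ h : v ∉ F, H.Reachable ⟨u, hu⟩ ⟨v, h⟩) with hSdef
  set T : Finset (Fin n) := Fᶜ \ S with hTdef
  have hmemS : ∀ v, v ∈ S ↔ ∃ h : v ∉ F, H.Reachable ⟨u, hu⟩ ⟨v, h⟩ := by
    intro v; simp [hSdef]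
  have hSF : ∀ v ∈ S, v ∉ F := fun v hv => ((hmemS v).1 hv).1
  have hTF : ∀ v ∈ T, v ∉ F := by
    intro v hv; simpa using (Finset.mem_sdiff.1 hv).1
  have hTS : ∀ v ∈ T, v ∉ S := fun v hv => (Finset.mem_sdiff.1 hv).2
  have huS : u ∈ S := (hmemS u).2 ⟨hu, SimpleGraph.Reachable.refl _⟩
  have hwT : w ∈ T := by
    refine Finset.mem_sdiff.2 ⟨by simpa using hwF, fun hwS => ?_⟩
    obtain ⟨h, hr⟩ := (hmemS w).1 hwS
    exact hur hr
  have hdisj : Disjoint S T := by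
    rw [Finset.disjoint_right]; exact hTS
  -- closure of S under adjacency within Fᶜ
  have hcloseS : ∀ i ∈ S, ∀ j, j ∉ F → G.Adj i j → j ∈ S := by
    intro i hi j hj hadj
    obtain ⟨hiF, hr⟩ := (hmemS i).1 hi
    refine (hmemS j).2 ⟨hj, hr.trans ?_⟩
    exact SimpleGraph.Adj.reachable (by exact hadj : H.Adj ⟨i, hiF⟩ ⟨j, hj⟩)
  have hcloseT : ∀ i ∈ T, ∀ j, j ∉ F → G.Adj i j → j ∈ T := by
    intro i hi j hj hadj
    refine Finset.mem_sdiff.2 ⟨by simpa using hj, fun hjS => ?_⟩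
    exact hTS i hi (hcloseS j hjS i (hTF i hi) hadj.symm)
  -- every vertex outside F has few neighbours in F
  have hαd : ∀ v, v ∉ F → ((F.filter (G.Adj v)).card : ℝ) ≤ α * d := by
    intro v hv
    have hv' : v ∈ Fᶜ := by simpa using hv
    have := Finset.le_sup' (fun v => ((F.filter (G.Adj v)).card : ℝ) / d) hv'
    rw [← hα] at this
    rw [div_le_iff₀ hd0] at this
    linarith [this]
  -- neighbour counting
  have hcount : ∀ v, v ∉ F → ((1 - α) * d : ℝ) ≤
      ((G.neighborFinset v).filter (fun j => j ∉ F)).card := by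
    intro v hv
    have hsplit : ((G.neighborFinset v).filter (fun j => j ∈ F)).card +
        ((G.neighborFinset v).filter (fun j => j ∉ F)).card = d := by
      rw [Finset.card_filter_add_card_filter_not]
      exact hreg v
    have heq : (G.neighborFinset v).filter (fun j => j ∈ F) = F.filter (G.Adj v) := by
      ext j; simp [SimpleGraph.mem_neighborFinset, and_comm]
    have h1 : ((G.neighborFinset v).filter (fun j => j ∈ F)).card ≤ α * d := by
      rw [heq]; exact hαd v hv
    have h2 : (((G.neighborFinset v).filter (fun j => j ∈ F)).card : ℝ) +
        ((G.neighborFinset v).filter (fun j => j ∉ F)).card = d := by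
      exact_mod_cast hsplit
    nlinarith
  have hcountS : ∀ v ∈ S, ((1 - α) * d : ℝ) ≤ ((G.neighborFinset v ∩ S).card : ℝ) := by
    intro v hv
    refine le_trans (hcount v (hSF v hv)) ?_
    have : (G.neighborFinset v).filter (fun j => j ∉ F) ⊆ G.neighborFinset v ∩ S := by
      intro j hj
      obtain ⟨hjN, hjF⟩ := Finset.mem_filter.1 hj
      exact Finset.mem_inter.2 ⟨hjN, hcloseS v hv j hjF ((SimpleGraph.mem_neighborFinset _ _ _).1 hjN)⟩
    exact_mod_cast Finset.card_le_card this
  have hcountT : ∀ v ∈ T, ((1 - α) * d : ℝ) ≤ ((G.neighborFinset v ∩ T).card : ℝ) := by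
    intro v hv
    refine le_trans (hcount v (hTF v hv)) ?_
    have : (G.neighborFinset v).filter (fun j => j ∉ F) ⊆ G.neighborFinset v ∩ T := by
      intro j hj
      obtain ⟨hjN, hjF⟩ := Finset.mem_filter.1 hj
      exact Finset.mem_inter.2 ⟨hjN, hcloseT v hv j hjF ((SimpleGraph.mem_neighborFinset _ _ _).1 hjN)⟩
    exact_mod_cast Finset.card_le_card this
  -- leading eigenvector pairing
  set i0 : Fin n := ⟨0, by omega⟩ with hi0
  set i1 : Fin n := ⟨1, by omega⟩ with hi1
  set p : ℝ := ∑ i ∈ S, φ i0 i with hp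
  set q : ℝ := ∑ i ∈ T, φ i0 i with hq
  obtain ⟨a, b, hab0, habpq⟩ : ∃ a b : ℝ, ¬(a = 0 ∧ b = 0) ∧ a * p + b * q = 0 := by
    by_cases hpq : p = 0 ∧ q = 0
    · exact ⟨1, 1, by norm_num, by rw [hpq.1, hpq.2]; ring⟩
    · exact ⟨q, -p, fun h => hpq ⟨by linarith [h.2], h.1⟩, by ring⟩
  -- the test vector
  set x : Fin n → ℝ := fun i => if i ∈ S then a else if i ∈ T then b else 0 with hx
  have hxS : ∀ i ∈ S, x i = a := by intro i hi; simp [hx, hi]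
  have hxT : ∀ i ∈ T, x i = b := by
    intro i hi; simp [hx, hTS i hi, hi]
  have hx0 : ∀ i, i ∉ S → i ∉ T → x i = 0 := by
    intro i h1 h2; simp [hx, h1, h2]
  -- splitting sums over S ∪ T
  have hsum_split : ∀ f : Fin n → ℝ, (∀ i, i ∉ S → i ∉ T → f i = 0) →
      ∑ i, f i = ∑ i ∈ S, f i + ∑ i ∈ T, f i := by
    intro f hf
    rw [← Finset.sum_union hdisj]
    refine (Finset.sum_subset (Finset.subset_univ _) ?_).symm
    intro i _ hi
    rw [Finset.mem_union] at hi
    push_neg at hi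
    exact hf i hi.1 hi.2
  set Nr : ℝ := a ^ 2 * S.card + b ^ 2 * T.card with hNr
  have hxx : ∑ i, x i * x i = Nr := by
    rw [hsum_split _ (fun i h1 h2 => by rw [hx0 i h1 h2]; ring)]
    have h1 : ∑ i ∈ S, x i * x i = ∑ _i ∈ S, a * a :=
      Finset.sum_congr rfl fun i hi => by rw [hxS i hi]
    have h2 : ∑ i ∈ T, x i * x i = ∑ _i ∈ T, b * b :=
      Finset.sum_congr rfl fun i hi => by rw [hxT i hi]
    rw [h1, h2, Finset.sum_const, Finset.sum_const, nsmul_eq_mul, nsmul_eq_mul, hNr]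
    ring
  have hNpos : 0 < Nr := by
    have hS1 : (1 : ℝ) ≤ S.card := by
      exact_mod_cast Finset.card_pos.2 ⟨u, huS⟩
    have hT1 : (1 : ℝ) ≤ T.card := by
      exact_mod_cast Finset.card_pos.2 ⟨w, hwT⟩
    have hS0 : (0:ℝ) ≤ S.card := Nat.cast_nonneg _
    have hT0 : (0:ℝ) ≤ T.card := Nat.cast_nonneg _
    rcases not_and_or.1 hab0 with h | h
    · have : 0 < a ^ 2 := by positivity
      rw [hNr]; nlinarith [sq_nonneg b]
    · have : 0 < b ^ 2 := by positivity
      rw [hNr]; nlinarith [sq_nonneg a]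
  -- matrix algebra: expansion in the eigenbasis
  set Φ : Matrix (Fin n) (Fin n) ℝ := Matrix.of φ with hΦ
  have hO : Φ * Φᵀ = 1 := by
    ext a' b'
    rw [Matrix.mul_apply, Matrix.one_apply]
    simpa [hΦ] using horth a' b'
  have hO' : Φᵀ * Φ = 1 := mul_eq_one_comm.1 hO
  have hME : M * Φᵀ = Φᵀ * Matrix.diagonal μ := by
    ext i a'
    rw [Matrix.mul_diagonal, Matrix.transpose_apply]
    have := congrFun (heig a') i
    rw [Matrix.mulVec] at this
    simpa [Matrix.mul_apply, Matrix.transpose_apply, hΦ, dotProduct,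
      Pi.smul_apply, smul_eq_mul, mul_comm] using this
  set c : Fin n → ℝ := Φ.mulVec x with hc
  have hxc : Φᵀ.mulVec c = x := by
    rw [hc, Matrix.mulVec_mulVec, hO', Matrix.one_mulVec]
  have hdot_cc : x ⬝ᵥ x = c ⬝ᵥ c := by
    calc x ⬝ᵥ x = x ⬝ᵥ (Φᵀ.mulVec c) := by rw [hxc]
      _ = (x ᵥ* Φᵀ) ⬝ᵥ c := Matrix.dotProduct_mulVec _ _ _
      _ = (Φ.mulVec x) ⬝ᵥ c := by rw [Matrix.vecMul_transpose]
      _ = c ⬝ᵥ c := by rw [← hc]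
  have hquad : x ⬝ᵥ M.mulVec x = ∑ a', μ a' * (c a') ^ 2 := by
    calc x ⬝ᵥ M.mulVec x = x ⬝ᵥ (M.mulVec (Φᵀ.mulVec c)) := by rw [hxc]
      _ = x ⬝ᵥ ((M * Φᵀ).mulVec c) := by rw [Matrix.mulVec_mulVec]
      _ = x ⬝ᵥ ((Φᵀ * Matrix.diagonal μ).mulVec c) := by rw [hME]
      _ = x ⬝ᵥ (Φᵀ.mulVec ((Matrix.diagonal μ).mulVec c)) := by rw [← Matrix.mulVec_mulVec]
      _ = (x ᵥ* Φᵀ) ⬝ᵥ ((Matrix.diagonal μ).mulVec c) := Matrix.dotProduct_mulVec _ _ _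
      _ = (Φ.mulVec x) ⬝ᵥ ((Matrix.diagonal μ).mulVec c) := by rw [Matrix.vecMul_transpose]
      _ = c ⬝ᵥ ((Matrix.diagonal μ).mulVec c) := by rw [← hc]
      _ = ∑ a', μ a' * (c a') ^ 2 := by
          rw [dotProduct]
          refine Finset.sum_congr rfl fun a' _ => ?_
          rw [Matrix.mulVec_diagonal]
          ring
  have hc0 : c i0 = 0 := by
    have : c i0 = ∑ i, φ i0 i * x i := by
      simp [hc, Matrix.mulVec, dotProduct, hΦ]
    rw [this, hsum_split _ (fun i h1 h2 => by rw [hx0 i h1 h2]; ring)]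
    have h1 : ∑ i ∈ S, φ i0 i * x i = p * a := by
      rw [hp, Finset.sum_mul]
      exact Finset.sum_congr rfl fun i hi => by rw [hxS i hi]
    have h2 : ∑ i ∈ T, φ i0 i * x i = q * b := by
      rw [hq, Finset.sum_mul]
      exact Finset.sum_congr rfl fun i hi => by rw [hxT i hi]
    rw [h1, h2]
    linarith [habpq]
  -- upper bound via the second eigenvalue
  have hup : x ⬝ᵥ M.mulVec x ≤ μ i1 * Nr := by
    rw [hquad]
    have hN' : c ⬝ᵥ c = Nr := by rw [← hdot_cc, ← hxx]; rfl
    have hstep : ∑ a', μ a' * (c a') ^ 2 ≤ ∑ a', μ i1 * (c a') ^ 2 := by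
      refine Finset.sum_le_sum fun a' _ => ?_
      by_cases ha' : a' = i0
      · rw [ha', hc0]; simp
      · have h1a : i1 ≤ a' := by
          have hne0 : a'.val ≠ 0 := fun h => ha' (by rw [hi0]; exact Fin.ext h)
          rw [hi1, Fin.le_def]
          show 1 ≤ a'.val
          omega
        exact mul_le_mul_of_nonneg_right (hmono i1 a' h1a) (sq_nonneg _)
    have hsq : ∑ a', (c a') ^ 2 = Nr := by
      rw [← hN', dotProduct]
      exact Finset.sum_congr rfl fun a' _ => by ring
    calc ∑ a', μ a' * (c a') ^ 2 ≤ ∑ a', μ i1 * (c a') ^ 2 := hstep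
      _ = μ i1 * ∑ a', (c a') ^ 2 := by rw [Finset.mul_sum]
      _ = μ i1 * Nr := by rw [hsq]
  -- lower bound via degrees
  have hAxS : ∀ v ∈ S, ((G.adjMatrix ℝ).mulVec x) v = a * ((G.neighborFinset v ∩ S).card : ℝ) := by
    intro v hv
    rw [SimpleGraph.adjMatrix_mulVec_apply]
    have hsub : G.neighborFinset v ∩ S ⊆ G.neighborFinset v := Finset.inter_subset_left
    rw [← Finset.sum_subset hsub ?_]
    · rw [Finset.sum_congr rfl (fun j hj => hxS j (Finset.mem_inter.1 hj).2), Finset.sum_const]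
      simp [mul_comm]
    · intro j hjN hj
      have hjS : j ∉ S := fun h => hj (Finset.mem_inter.2 ⟨hjN, h⟩)
      have hadj := (SimpleGraph.mem_neighborFinset _ _ _).1 hjN
      refine hx0 j hjS fun hjT => ?_
      exact hjS (hcloseS v hv j (hTF j hjT) hadj)
  have hAxT : ∀ v ∈ T, ((G.adjMatrix ℝ).mulVec x) v = b * ((G.neighborFinset v ∩ T).card : ℝ) := by
    intro v hv
    rw [SimpleGraph.adjMatrix_mulVec_apply]
    have hsub : G.neighborFinset v ∩ T ⊆ G.neighborFinset v := Finset.inter_subset_left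
    rw [← Finset.sum_subset hsub ?_]
    · rw [Finset.sum_congr rfl (fun j hj => hxT j (Finset.mem_inter.1 hj).2), Finset.sum_const]
      simp [mul_comm]
    · intro j hjN hj
      have hjT : j ∉ T := fun h => hj (Finset.mem_inter.2 ⟨hjN, h⟩)
      have hadj := (SimpleGraph.mem_neighborFinset _ _ _).1 hjN
      refine hx0 j (fun hjS => ?_) hjT
      exact hjT (hcloseT v hv j (hSF j hjS) hadj)
  have hlow : (1 - α) * d * Nr ≤ x ⬝ᵥ (G.adjMatrix ℝ).mulVec x := by
    rw [dotProduct]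
    rw [hsum_split _ ?hz]
    case hz =>
      intro i h1 h2; rw [hx0 i h1 h2]; ring
    have hS' : ∀ v ∈ S, a ^ 2 * ((1 - α) * d) ≤ x v * ((G.adjMatrix ℝ).mulVec x) v := by
      intro v hv
      rw [hxS v hv, hAxS v hv, ← mul_assoc]
      have := hcountS v hv
      nlinarith [sq_nonneg a]
    have hT' : ∀ v ∈ T, b ^ 2 * ((1 - α) * d) ≤ x v * ((G.adjMatrix ℝ).mulVec x) v := by
      intro v hv
      rw [hxT v hv, hAxT v hv, ← mul_assoc]
      have := hcountT v hv
      nlinarith [sq_nonneg b]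
    have h1 := Finset.sum_le_sum hS'
    have h2 := Finset.sum_le_sum hT'
    rw [Finset.sum_const, nsmul_eq_mul] at h1
    rw [Finset.sum_const, nsmul_eq_mul] at h2
    rw [hNr]
    linarith [h1, h2]
  -- put it together
  have hMx : x ⬝ᵥ M.mulVec x = (d : ℝ)⁻¹ * (x ⬝ᵥ (G.adjMatrix ℝ).mulVec x) := by
    rw [hMdef, Matrix.smul_mulVec, dotProduct_smul, smul_eq_mul]
  have hlam1 : μ i1 ≤ lam := le_trans (le_abs_self _) (le_trans (le_max_left _ _) hlam)
  have key : (1 - α) * Nr ≤ lam * Nr := by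
    have h1 : (1 - α) * Nr ≤ x ⬝ᵥ M.mulVec x := by
      rw [hMx]
      have h := mul_le_mul_of_nonneg_left hlow (le_of_lt (inv_pos.2 hd0))
      have he : (d:ℝ)⁻¹ * ((1 - α) * d * Nr) = (1 - α) * Nr := by
        field_simp
      linarith [h, he.le, he.ge]
    have h2 : μ i1 * Nr ≤ lam * Nr := mul_le_mul_of_nonneg_right hlam1 (le_of_lt hNpos)
    linarith [hup]
  have : (1 : ℝ) - α ≤ lam := le_of_mul_le_mul_right (by linarith [key]) hNpos
  linarith
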